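/- Let λ ∈ (0,1) be irrational with convergents p_m/q_m and fix positive integers p, q with η = p − qλ, −λ < η < 1. Let T(x) = x + λ for x < 0, T(x) = x − 1 for x > 0, T(0) = −η on [−1,λ). If (m₀, n₀) is the largest pair (in the ordering by w_λ) of semiconvergent indices with P_{m₀,n₀} < p or Q_{m₀,n₀} < q, then for every pair (m,n) with w_λ(m,n) > w_λ(m₀,n₀), T^{h_{m,n}}(0) = Δ_{m,n}(λ), where h_{m,n} = (Q_{m,n} − q) + (P_{m,n} − p) + 1 and Δ_{m,n}(λ) = Q_{m,n}λ − P_{m,n}. -/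

import Mathlib

noncomputable section

/-- The Gauss map `g(x) = 1/x - ⌊1/x⌋`. -/
def gaussMap (x : ℝ) : ℝ := 1 / x - ⌊(1 : ℝ) / x⌋

/-- `cfA lam k` is the continued fraction coefficient `λ_{k+1}` of `lam = [0; λ₁, λ₂, ...]`,
i.e. `λ_{k+1} = ⌊1 / g^k(lam)⌋`. -/
def cfA (lam : ℝ) (k : ℕ) : ℤ := ⌊1 / (gaussMap^[k] lam)⌋

/-- Shifted convergent numerators: `num lam (m+1) = p_m`, with `num lam 0 = p_{-1} = 1`. -/
def num (lam : ℝ) : ℕ → ℤ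
  | 0 => 1
  | 1 => 0
  | m + 2 => cfA lam m * num lam (m + 1) + num lam m

/-- Shifted convergent denominators: `den lam (m+1) = q_m`, with `den lam 0 = q_{-1} = 0`. -/
def den (lam : ℝ) : ℕ → ℤ
  | 0 => 0
  | 1 => 1
  | m + 2 => cfA lam m * den lam (m + 1) + den lam m

/-- Semiconvergent numerator `P_{m,n}`: `P_{m,0} = p_m` and `P_{m,n} = n·p_m + p_{m-1}` for `n ≥ 1`. -/
def Ps (lam : ℝ) (m n : ℕ) : ℤ :=
  if n = 0 then num lam (m + 1) else n * num lam (m + 1) + num lam m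

/-- Semiconvergent denominator `Q_{m,n}`: `Q_{m,0} = q_m` and `Q_{m,n} = n·q_m + q_{m-1}` for `n ≥ 1`. -/
def Qs (lam : ℝ) (m n : ℕ) : ℤ :=
  if n = 0 then den lam (m + 1) else n * den lam (m + 1) + den lam m

/-- The semiconvergent error `Δ_{m,n}(λ) = Q_{m,n}·λ − P_{m,n}`. -/
def Del (lam : ℝ) (m n : ℕ) : ℝ := (Qs lam m n : ℝ) * lam - (Ps lam m n : ℝ)

/-- The error `Δ_{m-1,0}(λ) = q_{m-1}·λ − p_{m-1}` (with `Δ_{-1,0} = −1` for `m = 0`). -/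
def DelPrev (lam : ℝ) (m : ℕ) : ℝ := (den lam m : ℝ) * lam - (num lam m : ℝ)

/-- The indexing function `w_λ(m,n)`: equal to `n` if `m = 0` and to `λ₁ + ... + λ_m + n`
otherwise. -/
def wIdx (lam : ℝ) (m n : ℕ) : ℤ :=
  if m = 0 then (n : ℤ) else (∑ k ∈ Finset.range m, cfA lam k) + n

/-- The baseline interval map `T` on `[−1, λ)`: `T(x) = x + λ` for `x < 0`, `T(x) = x − 1` for
`x > 0`, and `T(0) = −η`. -/
def Tmap (lam eta : ℝ) (x : ℝ) : ℝ :=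
  if x < 0 then x + lam else if 0 < x then x - 1 else -eta

lemma gauss_iter (lam : ℝ) (h : lam ∈ Set.Ioo (0 : ℝ) 1) (hirr : Irrational lam) (k : ℕ) :
    gaussMap^[k] lam ∈ Set.Ioo (0 : ℝ) 1 ∧ Irrational (gaussMap^[k] lam) := by
  induction k with
  | zero => exact ⟨h, hirr⟩
  | succ k ih =>
    obtain ⟨⟨hx0, hx1⟩, hxi⟩ := ih
    set x := gaussMap^[k] lam with hxdef
    have hiter : gaussMap^[k+1] lam = gaussMap x := by
      rw [Function.iterate_succ_apply']
    have hinv : Irrational (1 / x) := by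
      simpa [one_div] using hxi.inv
    have hfr : gaussMap x = Int.fract (1 / x) := by
      rw [Int.fract]; rfl
    have hirr' : Irrational (gaussMap x) := by
      rw [hfr]; exact Irrational.sub_intCast hinv _
    have h0 : 0 ≤ gaussMap x := by rw [hfr]; exact Int.fract_nonneg _
    have h1 : gaussMap x < 1 := by rw [hfr]; exact Int.fract_lt_one _
    have hne : gaussMap x ≠ 0 := hirr'.ne_zero
    rw [hiter]
    exact ⟨⟨lt_of_le_of_ne h0 (Ne.symm hne), h1⟩, hirr'⟩

lemma cfA_ge_one (lam : ℝ) (h : lam ∈ Set.Ioo (0 : ℝ) 1) (hirr : Irrational lam) (k : ℕ) :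
    1 ≤ cfA lam k := by
  obtain ⟨⟨hx0, hx1⟩, _⟩ := gauss_iter lam h hirr k
  have : (1 : ℝ) ≤ 1 / gaussMap^[k] lam := by
    rw [le_div_iff₀ hx0]; linarith
  exact_mod_cast Int.le_floor.mpr (by exact_mod_cast this)

lemma cfA_mul_le_one (lam : ℝ) (h : lam ∈ Set.Ioo (0 : ℝ) 1) (hirr : Irrational lam) (k : ℕ) :
    (cfA lam k : ℝ) * gaussMap^[k] lam ≤ 1 := by
  obtain ⟨⟨hx0, hx1⟩, _⟩ := gauss_iter lam h hirr k
  have := Int.floor_le (1 / gaussMap^[k] lam)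
  calc (cfA lam k : ℝ) * gaussMap^[k] lam ≤ (1 / gaussMap^[k] lam) * gaussMap^[k] lam :=
        mul_le_mul_of_nonneg_right this hx0.le
    _ = 1 := by field_simp

lemma delPrev_rec (lam : ℝ) (k : ℕ) :
    DelPrev lam (k + 2) = (cfA lam k : ℝ) * DelPrev lam (k + 1) + DelPrev lam k := by
  simp only [DelPrev, den, num]
  push_cast
  ring

lemma gauss_succ (lam : ℝ) (k : ℕ) :
    gaussMap^[k+1] lam = 1 / gaussMap^[k] lam - (cfA lam k : ℝ) := by
  rw [Function.iterate_succ_apply']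
  rfl

lemma delPrev_eq (lam : ℝ) (h : lam ∈ Set.Ioo (0 : ℝ) 1) (hirr : Irrational lam) (k : ℕ) :
    DelPrev lam (k + 1) = (-1 : ℝ) ^ k * ∏ i ∈ Finset.range (k + 1), gaussMap^[i] lam := by
  induction k using Nat.twoStepInduction with
  | zero =>
    simp [DelPrev, den, num]
  | one =>
    have hx0 : gaussMap^[0] lam ≠ 0 := (gauss_iter lam h hirr 0).1.1.ne'
    have h1 := gauss_succ lam 0
    have hl : lam ≠ 0 := h.1.ne'
    simp only [DelPrev, den, num, Finset.prod_range_succ, Finset.prod_range_one]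
    push_cast
    rw [h1]
    simp only [Function.iterate_zero_apply]
    field_simp
    ring
  | more k ih ih1 =>
    have hxk : gaussMap^[k+1] lam ≠ 0 := (gauss_iter lam h hirr (k+1)).1.1.ne'
    have h1 := gauss_succ lam (k+1)
    have hkey : gaussMap^[k+1] lam * gaussMap^[k+2] lam = 1 - (cfA lam (k+1) : ℝ) * gaussMap^[k+1] lam := by
      rw [h1, mul_sub, mul_one_div, div_self hxk]; ring
    rw [delPrev_rec lam (k+1), ih1, ih]
    rw [Finset.prod_range_succ (n := k + 2), Finset.prod_range_succ (n := k + 1)]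
    have : ((-1:ℝ))^(k+2) = (-1)^k := by ring
    rw [this]
    linear_combination (-((-1:ℝ)^k) * ∏ i ∈ Finset.range (k+1), gaussMap^[i] lam) * hkey

lemma prod_bounds (lam : ℝ) (h : lam ∈ Set.Ioo (0 : ℝ) 1) (hirr : Irrational lam) (k : ℕ) :
    0 < ∏ i ∈ Finset.range (k + 1), gaussMap^[i] lam ∧
      ∏ i ∈ Finset.range (k + 1), gaussMap^[i] lam ≤ lam := by
  induction k with
  | zero => simpa using h.1
  | succ k ih =>
    obtain ⟨h0, h1⟩ := ih
    obtain ⟨⟨hx0, hx1⟩, _⟩ := gauss_iter lam h hirr (k+1)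
    rw [Finset.prod_range_succ]
    constructor
    · positivity
    · nlinarith

lemma prod_lt (lam : ℝ) (h : lam ∈ Set.Ioo (0 : ℝ) 1) (hirr : Irrational lam) (k : ℕ) :
    ∏ i ∈ Finset.range (k + 2), gaussMap^[i] lam < lam := by
  obtain ⟨h0, h1⟩ := prod_bounds lam h hirr k
  obtain ⟨⟨hx0, hx1⟩, _⟩ := gauss_iter lam h hirr (k+1)
  rw [Finset.prod_range_succ]
  nlinarith

lemma del_mem (lam : ℝ) (h : lam ∈ Set.Ioo (0 : ℝ) 1) (hirr : Irrational lam)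
    (m n : ℕ) (hmn : (n : ℤ) < cfA lam m) (hne : m ≠ 0 ∨ n ≠ 0) :
    Del lam m n ∈ Set.Ioo (-1 : ℝ) lam := by
  have hl0 := h.1
  have hl1 := h.2
  rcases Nat.eq_zero_or_pos n with hn0 | hn1
  · -- n = 0, so m ≥ 1
    subst hn0
    obtain ⟨m', rfl⟩ : ∃ m', m = m' + 1 := by
      rcases hne with hm | hn
      · exact ⟨m - 1, by omega⟩
      · omega
    have hDel : Del lam (m' + 1) 0 = DelPrev lam (m' + 2) := by
      simp [Del, Ps, Qs, DelPrev]
    rw [hDel, delPrev_eq lam h hirr (m' + 1)]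
    have hlt := prod_lt lam h hirr m'
    have hpos := (prod_bounds lam h hirr (m' + 1)).1
    rcases Nat.even_or_odd (m' + 1) with he | ho
    · rw [he.neg_one_pow]
      constructor <;> nlinarith
    · rw [ho.neg_one_pow]
      constructor <;> nlinarith
  · -- n ≥ 1
    have hn : n ≠ 0 := by omega
    have hna : (n : ℝ) ≤ (cfA lam m : ℝ) - 1 := by
      have h2 : (n : ℤ) + 1 ≤ cfA lam m := hmn
      have h3 : ((n : ℤ) : ℝ) + 1 ≤ (cfA lam m : ℝ) := by exact_mod_cast h2
      push_cast at h3
      linarith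
    have hn1' : (1 : ℝ) ≤ (n : ℝ) := by exact_mod_cast hn1
    have hax := cfA_mul_le_one lam h hirr m
    obtain ⟨⟨hx0, hx1⟩, _⟩ := gauss_iter lam h hirr m
    have hnx : (n : ℝ) * gaussMap^[m] lam ≤ 1 - gaussMap^[m] lam := by
      nlinarith
    have hnxpos : 0 < (n : ℝ) * gaussMap^[m] lam := by nlinarith
    rcases Nat.eq_zero_or_pos m with hm0 | hm1
    · -- m = 0 : Del = n·λ − 1
      subst hm0
      have hDel : Del lam 0 n = (n : ℝ) * lam - 1 := by
        simp [Del, Ps, Qs, num, den, hn]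
      rw [hDel]
      have hx : gaussMap^[0] lam = lam := rfl
      rw [hx] at hnx hnxpos
      constructor <;> nlinarith
    · -- m ≥ 1
      obtain ⟨m', rfl⟩ : ∃ m', m = m' + 1 := ⟨m - 1, by omega⟩
      have hDel : Del lam (m' + 1) n =
          (n : ℝ) * DelPrev lam (m' + 2) + DelPrev lam (m' + 1) := by
        simp only [Del, Ps, Qs, DelPrev, if_neg hn]
        push_cast
        ring
      rw [hDel, delPrev_eq lam h hirr (m' + 1), delPrev_eq lam h hirr m',
        Finset.prod_range_succ (n := m' + 1)]
      set pi := ∏ i ∈ Finset.range (m' + 1), gaussMap^[i] lam with hpi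
      set x := gaussMap^[m' + 1] lam with hxdef
      obtain ⟨hppos, hple⟩ := prod_bounds lam h hirr m'
      have hx01 := (gauss_iter lam h hirr (m' + 1)).1
      rcases Nat.even_or_odd m' with he | ho
      · have h1 : ((-1 : ℝ)) ^ m' = 1 := he.neg_one_pow
        have h2 : ((-1 : ℝ)) ^ (m' + 1) = -1 := (Even.add_one he).neg_one_pow
        rw [h1, h2]
        constructor <;> nlinarith
      · have h1 : ((-1 : ℝ)) ^ m' = -1 := ho.neg_one_pow
        have h2 : ((-1 : ℝ)) ^ (m' + 1) = 1 := (Odd.add_one ho).neg_one_pow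
        rw [h1, h2]
        constructor <;> nlinarith

lemma irr_comb {lam : ℝ} (hirr : Irrational lam) {A B : ℤ} (hA : A ≠ 0) :
    (A : ℝ) * lam - (B : ℝ) ≠ 0 := by
  intro hh
  have hAr : (A : ℝ) ≠ 0 := Int.cast_ne_zero.mpr hA
  apply hirr
  refine ⟨(B : ℚ) / (A : ℚ), ?_⟩
  push_cast
  field_simp
  linarith

lemma orbit (lam : ℝ) (h : lam ∈ Set.Ioo (0 : ℝ) 1) (hirr : Irrational lam)
    (p q : ℕ) (hq : 0 < q) (eta : ℝ) (heta : eta = (p : ℝ) - (q : ℝ) * lam)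
    (h1 : -lam < eta) (h2 : eta < 1) (t : ℕ) :
    ∃ a b : ℕ, a + b = t ∧
      (Tmap lam eta)^[t + 1] 0 = ((q : ℝ) + (a : ℝ)) * lam - ((p : ℝ) + (b : ℝ)) ∧
      (Tmap lam eta)^[t + 1] 0 ∈ Set.Ioo (-1 : ℝ) lam := by
  have hl0 := h.1
  have hl1 := h.2
  induction t with
  | zero =>
    refine ⟨0, 0, rfl, ?_, ?_, ?_⟩
    · simp [Tmap, heta]
    · simp [Tmap]; linarith
    · simp [Tmap]; linarith
  | succ t ih =>
    obtain ⟨a, b, hab, hx, hm1, hm2⟩ := ih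
    set x := (Tmap lam eta)^[t + 1] 0 with hxd
    have hne : x ≠ 0 := by
      rw [hx]
      have : ((((q : ℤ) + a) : ℤ) : ℝ) * lam - ((((p : ℤ) + b) : ℤ) : ℝ) ≠ 0 :=
        irr_comb hirr (by positivity)
      push_cast at this
      convert this using 2
    have hit : (Tmap lam eta)^[t + 1 + 1] 0 = Tmap lam eta x := by
      rw [Function.iterate_succ_apply']
    rcases lt_trichotomy x 0 with hlt | heq | hgt
    · refine ⟨a + 1, b, by omega, ?_, ?_, ?_⟩ <;>
        rw [hit, show Tmap lam eta x = x + lam from if_pos hlt]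
      · rw [hx]; push_cast; ring
      · linarith
      · linarith
    · exact absurd heq hne
    · have hTx : Tmap lam eta x = x - 1 := by
        rw [Tmap, if_neg (by linarith), if_pos hgt]
      refine ⟨a, b + 1, by omega, ?_, ?_, ?_⟩ <;> rw [hit, hTx]
      · rw [hx]; push_cast; ring
      · linarith
      · linarith

lemma wIdx_nonneg (lam : ℝ) (h : lam ∈ Set.Ioo (0 : ℝ) 1) (hirr : Irrational lam)
    (m n : ℕ) : 0 ≤ wIdx lam m n := by
  unfold wIdx
  split
  · positivity
  · have hs : 0 ≤ ∑ k ∈ Finset.range m, cfA lam k :=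
      Finset.sum_nonneg fun k _ => le_trans zero_le_one (cfA_ge_one lam h hirr k)
    positivity

/-- Let `λ ∈ (0,1)` be irrational, `η = p − qλ ∈ (−λ, 1)` with `p, q` positive integers, and let
`(m₀, n₀)` be the largest pair (in the `w_λ` ordering) with `P_{m₀,n₀} < p` or `Q_{m₀,n₀} < q`.
Then for all `(m,n)` with `0 ≤ n < λ_{m+1}` and `w_λ(m,n) > w_λ(m₀,n₀)`, one has
`T^{h_{m,n}}(0) = Δ_{m,n}(λ)`, where `h_{m,n} = (Q_{m,n} − q) + (P_{m,n} − p) + 1`. -/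
theorem stmt19 (lam : ℝ) (h : lam ∈ Set.Ioo (0 : ℝ) 1) (hirr : Irrational lam)
    (p q : ℕ) (hp : 0 < p) (hq : 0 < q)
    (eta : ℝ) (heta : eta = (p : ℝ) - (q : ℝ) * lam)
    (heta1 : -lam < eta) (heta2 : eta < 1)
    (m₀ n₀ : ℕ) (hmn₀ : (n₀ : ℤ) < cfA lam m₀)
    (h₀ : Ps lam m₀ n₀ < p ∨ Qs lam m₀ n₀ < q)
    (hmax : ∀ m n : ℕ, (n : ℤ) < cfA lam m →
      (Ps lam m n < p ∨ Qs lam m n < q) → wIdx lam m n ≤ wIdx lam m₀ n₀)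
    (m n : ℕ) (hmn : (n : ℤ) < cfA lam m) (hgt : wIdx lam m₀ n₀ < wIdx lam m n) :
    (Tmap lam eta)^[((Qs lam m n - q) + (Ps lam m n - p) + 1).toNat] 0 = Del lam m n := by
  have hl0 := h.1
  have hl1 := h.2
  have hPQ : ¬(Ps lam m n < p ∨ Qs lam m n < q) := by
    intro hc
    exact absurd (hmax m n hmn hc) (not_le.mpr hgt)
  push_neg at hPQ
  obtain ⟨hP, hQ⟩ := hPQ
  have hne : m ≠ 0 ∨ n ≠ 0 := by
    by_contra hc
    push_neg at hc
    obtain ⟨hm0, hn0⟩ := hc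
    subst hm0; subst hn0
    have h1 : wIdx lam 0 0 = 0 := by simp [wIdx]
    have h2 := wIdx_nonneg lam h hirr m₀ n₀
    omega
  have hDel := del_mem lam h hirr m n hmn hne
  have hA : (0 : ℤ) ≤ Qs lam m n - q := by omega
  have hB : (0 : ℤ) ≤ Ps lam m n - p := by omega
  have ht : ((Qs lam m n - q) + (Ps lam m n - p) + 1).toNat =
      ((Qs lam m n - q).toNat + (Ps lam m n - p).toNat) + 1 := by omega
  rw [ht]
  obtain ⟨a, b, hab, hx, hmem⟩ :=
    orbit lam h hirr p q hq eta heta heta1 heta2 ((Qs lam m n - q).toNat + (Ps lam m n - p).toNat)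
  rw [hx]
  -- identify (q+a, p+b) with (Qs, Ps)
  set c : ℤ := ((q : ℤ) + a) - Qs lam m n with hc
  have hsum : ((q : ℤ) + a) + ((p : ℤ) + b) = Qs lam m n + Ps lam m n := by omega
  have hpb : ((p : ℤ) + b) = Ps lam m n - c := by omega
  have hqa : ((q : ℤ) + a) = Qs lam m n + c := by omega
  have hqaR : ((q : ℝ) + a) = (Qs lam m n : ℝ) + (c : ℝ) := by exact_mod_cast hqa
  have hpbR : ((p : ℝ) + b) = (Ps lam m n : ℝ) - (c : ℝ) := by
    have : (((p : ℤ) + b : ℤ) : ℝ) = ((Ps lam m n - c : ℤ) : ℝ) := by exact_mod_cast hpb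
    push_cast at this
    linarith
  have hdiff : ((q : ℝ) + a) * lam - ((p : ℝ) + b) - Del lam m n = (c : ℝ) * (lam + 1) := by
    rw [hqaR, hpbR]
    unfold Del
    ring
  rw [hx] at hmem
  obtain ⟨hm1, hm2⟩ := hmem
  obtain ⟨hd1, hd2⟩ := hDel
  have hcb1 : (c : ℝ) * (lam + 1) < 1 + lam := by linarith
  have hcb2 : -(1 + lam) < (c : ℝ) * (lam + 1) := by linarith
  have hc1 : (c : ℝ) < 1 := by nlinarith
  have hc2 : (-1 : ℝ) < (c : ℝ) := by nlinarith
  have hc0 : c = 0 := by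
    have i1 : c < 1 := by exact_mod_cast hc1
    have i2 : (-1 : ℤ) < c := by exact_mod_cast hc2
    omega
  rw [hc0] at hqaR hpbR
  rw [hqaR, hpbR]
  unfold Del
  push_cast
  ring
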